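/- arXiv:0806.0934 — 3 statements merged into one kernel-verified Lean document; each statement's English description precedes it below -/
import Mathlib

section
/- The Fourier cosine integral (3/(4\pi)) \int_0^{\infty} (\sin^4(\lambda t/4) / (\lambda^3 (t/4)^4)) \cos(\nu t) \, dt equals 1 - 6(\nu/\lambda)^2 + 6(|\nu|/\lambda)^3 for |\nu| \le \lambda/2, equals 2(1 - |\nu|/\lambda)^3 for \lambda/2 \le |\nu| \le \lambda, and equals 0 for |\nu| \ge \lambda. -/
open Real MeasureTheory Set Filter

namespace JacksonAux

lemma tendsto_pow_mul_exp (t : ℝ) (ht : 0 < t) (k : ℕ) :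
    Tendsto (fun x : ℝ => x ^ k * Real.exp (-(t * x))) atTop (nhds 0) := by
  have h1 : Tendsto (fun x : ℝ => t * x) atTop atTop :=
    Tendsto.const_mul_atTop ht tendsto_id
  have h2 := (Real.tendsto_pow_mul_exp_neg_atTop_nhds_zero k).comp h1
  have h3 := h2.const_mul ((1:ℝ)/t^k)
  rw [mul_zero] at h3
  refine h3.congr fun x => ?_
  simp only [Function.comp]
  field_simp
  ring

lemma integrableOn_exp_cos (x c : ℝ) (hx : 0 < x) :
    IntegrableOn (fun t => Real.exp (-(x * t)) * Real.cos (c * t)) (Ioi 0) := by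
  refine (exp_neg_integrableOn_Ioi 0 hx).mono' ?_ ?_
  · exact ((Real.continuous_exp.comp (continuous_const.mul continuous_id).neg).mul
      (Real.continuous_cos.comp (continuous_const.mul continuous_id))).aestronglyMeasurable
  · filter_upwards with t
    rw [norm_mul, Real.norm_eq_abs, Real.norm_eq_abs, Real.abs_exp]
    calc Real.exp (-(x*t)) * |Real.cos (c*t)| ≤ Real.exp (-(x*t)) * 1 := by
          exact mul_le_mul_of_nonneg_left (Real.abs_cos_le_one _) (Real.exp_pos _).le
      _ = Real.exp (-x*t) := by rw [mul_one, neg_mul]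

lemma integral_exp_cos (x c : ℝ) (hx : 0 < x) :
    ∫ t in Ioi (0:ℝ), Real.exp (-(x * t)) * Real.cos (c * t) = x / (x ^ 2 + c ^ 2) := by
  have hd : ∀ t ∈ Ici (0:ℝ), HasDerivAt
      (fun t => Real.exp (-(x * t)) * (c * Real.sin (c * t) - x * Real.cos (c * t)) / (x^2+c^2))
      (Real.exp (-(x * t)) * Real.cos (c * t)) t := by
    intro t _
    have h0 : (x:ℝ)^2 + c^2 ≠ 0 := by positivity
    have he : HasDerivAt (fun t : ℝ => Real.exp (-(x * t))) (-x * Real.exp (-(x*t))) t := by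
      have : HasDerivAt (fun t : ℝ => -(x * t)) (-x) t := by
        simpa [Pi.neg_def] using ((hasDerivAt_id t).const_mul x).neg
      simpa [mul_comm] using this.exp
    have hs : HasDerivAt (fun t : ℝ => c * Real.sin (c * t) - x * Real.cos (c * t))
        (c * (c * Real.cos (c*t)) - x * (-c * Real.sin (c*t))) t := by
      have h1 : HasDerivAt (fun t : ℝ => c * t) c t := by
        simpa using (hasDerivAt_id t).const_mul c
      have := ((h1.sin.const_mul c).sub ((h1.cos.const_mul x)))
      exact this.congr_deriv (by ring)
    have := (he.mul hs).div_const (x^2+c^2)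
    exact this.congr_deriv (by field_simp; ring)
  have htend : Tendsto
      (fun t => Real.exp (-(x * t)) * (c * Real.sin (c * t) - x * Real.cos (c * t)) / (x^2+c^2))
      atTop (nhds 0) := by
    apply squeeze_zero_norm (a := fun t => ((|c| + |x|) / (x^2+c^2)) * Real.exp (-(x * t)))
      (f := fun t => Real.exp (-(x * t)) * (c * Real.sin (c * t) - x * Real.cos (c * t)) / (x^2+c^2))
    · intro t
      have hA : |c * Real.sin (c*t) - x * Real.cos (c*t)| ≤ |c| + |x| := by
        calc |c * Real.sin (c*t) - x * Real.cos (c*t)| ≤ |c * Real.sin (c*t)| + |x * Real.cos (c*t)| :=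
              abs_sub _ _
          _ ≤ |c| * 1 + |x| * 1 := by
              rw [abs_mul, abs_mul]
              gcongr
              · exact Real.abs_sin_le_one _
              · exact Real.abs_cos_le_one _
          _ = |c| + |x| := by ring
      rw [Real.norm_eq_abs, abs_div, abs_of_pos (by positivity : (0:ℝ) < x^2+c^2), abs_mul,
        Real.abs_exp]
      calc Real.exp (-(x*t)) * |c * Real.sin (c*t) - x * Real.cos (c*t)| / (x^2+c^2)
            ≤ Real.exp (-(x*t)) * (|c| + |x|) / (x^2+c^2) := by
              gcongr
          _ = (|c| + |x|) / (x^2+c^2) * Real.exp (-(x*t)) := by ring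
    · have := (tendsto_pow_mul_exp x hx 0).const_mul ((|c| + |x|) / (x^2+c^2))
      rw [mul_zero] at this
      refine this.congr fun t => ?_
      simp
  have := integral_Ioi_of_hasDerivAt_of_tendsto' (fun t ht => hd t ht)
    (integrableOn_exp_cos x c hx) htend
  rw [this]
  simp
  field_simp

lemma hasDerivAt_gamma (t : ℝ) (ht : 0 < t) (x : ℝ) :
    HasDerivAt (fun x : ℝ => -(Real.exp (-(t * x)) * (x^3/t + 3*x^2/t^2 + 6*x/t^3 + 6/t^4)))
      (x ^ 3 * Real.exp (-(t * x))) x := by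
  have ht' : t ≠ 0 := ne_of_gt ht
  have he : HasDerivAt (fun x : ℝ => Real.exp (-(t * x))) (-t * Real.exp (-(t*x))) x := by
    have : HasDerivAt (fun x : ℝ => -(t * x)) (-t) x := by
      simpa [Pi.neg_def] using ((hasDerivAt_id x).const_mul t).neg
    simpa [mul_comm] using this.exp
  have hp : HasDerivAt (fun x : ℝ => x^3/t + 3*x^2/t^2 + 6*x/t^3 + 6/t^4)
      (3*x^2/t + 6*x/t^2 + 6/t^3) x := by
    have h1 : HasDerivAt (fun x : ℝ => x^3) (3*x^2) x := by
      simpa using hasDerivAt_pow 3 x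
    have h2 : HasDerivAt (fun x : ℝ => x^2) (2*x) x := by
      simpa using hasDerivAt_pow 2 x
    have := (((h1.div_const t).add ((h2.const_mul 3).div_const (t^2))).add
      (((hasDerivAt_id x).const_mul 6).div_const (t^3))).add_const (6/t^4)
    exact this.congr_deriv (by ring)
  have := (he.mul hp).neg
  exact this.congr_deriv (by field_simp; ring)

lemma gamma_tendsto (t : ℝ) (ht : 0 < t) :
    Tendsto (fun x : ℝ => -(Real.exp (-(t * x)) * (x^3/t + 3*x^2/t^2 + 6*x/t^3 + 6/t^4)))
      atTop (nhds 0) := by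
  have h3 := (tendsto_pow_mul_exp t ht 3).const_mul ((1:ℝ)/t)
  have h2 := (tendsto_pow_mul_exp t ht 2).const_mul ((3:ℝ)/t^2)
  have h1 := (tendsto_pow_mul_exp t ht 1).const_mul ((6:ℝ)/t^3)
  have h0 := (tendsto_pow_mul_exp t ht 0).const_mul ((6:ℝ)/t^4)
  have := (((h3.add h2).add h1).add h0).neg
  simp only [mul_zero, add_zero, neg_zero] at this
  refine this.congr fun x => ?_
  field_simp

lemma integrableOn_gamma (t : ℝ) (ht : 0 < t) :
    IntegrableOn (fun x : ℝ => x ^ 3 * Real.exp (-(t * x))) (Ioi 0) := by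
  refine integrableOn_Ioi_deriv_of_nonneg' (fun x _ => hasDerivAt_gamma t ht x)
    (fun x hx => ?_) (gamma_tendsto t ht)
  have : (0:ℝ) < x := hx
  positivity

lemma integral_gamma (t : ℝ) (ht : 0 < t) :
    ∫ x in Ioi (0:ℝ), x ^ 3 * Real.exp (-(t * x)) = 6 / t ^ 4 := by
  have := integral_Ioi_of_hasDerivAt_of_tendsto' (fun x _ => hasDerivAt_gamma t ht x)
    (integrableOn_gamma t ht) (gamma_tendsto t ht)
  rw [this]
  simp

lemma integrableOn_inv_sq_add (c : ℝ) :
    IntegrableOn (fun x : ℝ => c ^ 4 / (x ^ 2 + c ^ 2)) (Ioi 0) := by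
  rcases eq_or_ne c 0 with rfl | hc
  · simpa using integrableOn_zero
  · have habs : (0:ℝ) < |c| := abs_pos.mpr hc
    have hd : ∀ x ∈ Ici (0:ℝ), HasDerivAt (fun x : ℝ => |c|^3 * Real.arctan (x / |c|))
        (c ^ 4 / (x ^ 2 + c ^ 2)) x := by
      intro x _
      have h1 : HasDerivAt (fun x : ℝ => x / |c|) (1/|c|) x := by
        simpa using (hasDerivAt_id x).div_const |c|
      have := (h1.arctan.const_mul (|c|^3))
      refine this.congr_deriv ?_
      have hsq : |c|^2 = c^2 := sq_abs c
      field_simp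
      linear_combination (x ^ 2 * (|c| ^ 2 + c ^ 2) + |c| ^ 2 * c ^ 2) * hsq
    have htd : Tendsto (fun x : ℝ => |c|^3 * Real.arctan (x / |c|)) atTop
        (nhds (|c|^3 * (π/2))) := by
      apply Tendsto.const_mul
      have h1 : Tendsto (fun x : ℝ => x / |c|) atTop atTop :=
        tendsto_id.atTop_div_const habs
      exact (tendsto_nhds_of_tendsto_nhdsWithin tendsto_arctan_atTop).comp h1
    exact integrableOn_Ioi_deriv_of_nonneg' hd (fun x hx => by positivity) htd

lemma integral_inv_sq_add (c : ℝ) :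
    ∫ x in Ioi (0:ℝ), c ^ 4 / (x ^ 2 + c ^ 2) = π / 2 * |c| ^ 3 := by
  rcases eq_or_ne c 0 with rfl | hc
  · simp
  · have habs : (0:ℝ) < |c| := abs_pos.mpr hc
    have hd : ∀ x ∈ Ici (0:ℝ), HasDerivAt (fun x : ℝ => |c|^3 * Real.arctan (x / |c|))
        (c ^ 4 / (x ^ 2 + c ^ 2)) x := by
      intro x _
      have h1 : HasDerivAt (fun x : ℝ => x / |c|) (1/|c|) x := by
        simpa using (hasDerivAt_id x).div_const |c|
      have := (h1.arctan.const_mul (|c|^3))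
      refine this.congr_deriv ?_
      have hsq : |c|^2 = c^2 := sq_abs c
      field_simp
      linear_combination (x ^ 2 * (|c| ^ 2 + c ^ 2) + |c| ^ 2 * c ^ 2) * hsq
    have htd : Tendsto (fun x : ℝ => |c|^3 * Real.arctan (x / |c|)) atTop
        (nhds (|c|^3 * (π/2))) := by
      apply Tendsto.const_mul
      have h1 : Tendsto (fun x : ℝ => x / |c|) atTop atTop :=
        tendsto_id.atTop_div_const habs
      exact (tendsto_nhds_of_tendsto_nhdsWithin tendsto_arctan_atTop).comp h1
    rw [integral_Ioi_of_hasDerivAt_of_tendsto' hd (integrableOn_inv_sq_add c) htd]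
    simp [mul_comm]

lemma trig_expand (lam nu t : ℝ) :
    Real.sin (lam * t / 4) ^ 4 * Real.cos (nu * t) =
      3/8 * Real.cos (nu * t) - 1/4 * Real.cos ((lam/2 + nu) * t)
      - 1/4 * Real.cos ((lam/2 - nu) * t) + 1/16 * Real.cos ((lam + nu) * t)
      + 1/16 * Real.cos ((lam - nu) * t) := by
  have e1 : (lam/2 + nu) * t = lam * t / 2 + nu * t := by ring
  have e2 : (lam/2 - nu) * t = lam * t / 2 - nu * t := by ring
  have e3 : (lam + nu) * t = lam * t + nu * t := by ring
  have e4 : (lam - nu) * t = lam * t - nu * t := by ring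
  rw [e1, e2, e3, e4, Real.cos_add, Real.cos_sub, Real.cos_add, Real.cos_sub]
  have h2 : Real.cos (lam * t / 2) = 1 - 2 * Real.sin (lam * t / 4) ^ 2 := by
    rw [show lam * t / 2 = 2 * (lam * t / 4) by ring, Real.cos_two_mul]
    have := Real.sin_sq_add_cos_sq (lam * t / 4)
    linarith
  have h4 : Real.cos (lam * t) = 2 * Real.cos (lam * t / 2) ^ 2 - 1 := by
    have := Real.cos_two_mul (lam * t / 2)
    rw [show 2 * (lam * t / 2) = lam * t by ring] at this
    exact this
  rw [h4, h2]
  ring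

lemma meas_main (lam nu : ℝ) : AEStronglyMeasurable
    (fun t : ℝ => Real.sin (lam * t / 4) ^ 4 * Real.cos (nu * t) / t ^ 4) volume := by
  apply Measurable.aestronglyMeasurable
  fun_prop

lemma bound_main (lam nu : ℝ) (hlam : 0 < lam) : ∀ t : ℝ, 0 < t →
    ‖Real.sin (lam * t / 4) ^ 4 * Real.cos (nu * t) / t ^ 4‖ ≤
      min ((lam/4)^4) (1 / t^4) := by
  intro t ht
  have ht4 : (0:ℝ) < t ^ 4 := by positivity
  rw [Real.norm_eq_abs, abs_div, abs_of_pos ht4, abs_mul, abs_pow, le_min_iff]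
  have hcos : |Real.cos (nu * t)| ≤ 1 := Real.abs_cos_le_one _
  have habs4 : (0:ℝ) ≤ |Real.sin (lam * t / 4)| ^ 4 := by positivity
  constructor
  · have hs : |Real.sin (lam * t / 4)| ≤ lam * t / 4 := by
      have h := Real.abs_sin_le_abs (x := lam * t / 4)
      rwa [abs_of_pos (show (0:ℝ) < lam * t / 4 by positivity)] at h
    have h0 : |Real.sin (lam * t / 4)| ^ 4 ≤ (lam * t / 4) ^ 4 :=
      pow_le_pow_left₀ (abs_nonneg _) hs 4
    rw [div_le_iff₀ ht4]
    calc |Real.sin (lam * t / 4)| ^ 4 * |Real.cos (nu * t)|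
        ≤ |Real.sin (lam * t / 4)| ^ 4 * 1 := mul_le_mul_of_nonneg_left hcos habs4
      _ = |Real.sin (lam * t / 4)| ^ 4 := mul_one _
      _ ≤ (lam * t / 4) ^ 4 := h0
      _ = (lam/4)^4 * t^4 := by ring
  · rw [div_le_div_iff₀ ht4 ht4, one_mul]
    have hsin : |Real.sin (lam * t / 4)| ^ 4 ≤ 1 := by
      have := Real.abs_sin_le_one (lam * t / 4)
      calc |Real.sin (lam * t / 4)| ^ 4 ≤ 1 ^ 4 := pow_le_pow_left₀ (abs_nonneg _) this 4
        _ = 1 := one_pow 4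
    calc |Real.sin (lam * t / 4)| ^ 4 * |Real.cos (nu * t)| * t ^ 4
        ≤ 1 * 1 * t ^ 4 := by
          apply mul_le_mul_of_nonneg_right _ ht4.le
          exact mul_le_mul hsin hcos (abs_nonneg _) zero_le_one
      _ = t ^ 4 := by ring

lemma integrableOn_main (lam nu : ℝ) (hlam : 0 < lam) :
    IntegrableOn (fun t => Real.sin (lam * t / 4) ^ 4 * Real.cos (nu * t) / t ^ 4)
      (Ioi (0:ℝ)) := by
  rw [show Ioi (0:ℝ) = Ioc 0 1 ∪ Ioi 1 from (Ioc_union_Ioi_eq_Ioi zero_le_one).symm]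
  apply IntegrableOn.union
  · apply Integrable.mono' (g := fun _ : ℝ => (lam/4)^4)
    · exact integrableOn_const measure_Ioc_lt_top.ne
    · exact (meas_main lam nu).restrict
    · filter_upwards [ae_restrict_mem measurableSet_Ioc] with t ht
      exact le_trans (bound_main lam nu hlam t ht.1) (min_le_left _ _)
  · apply Integrable.mono' (g := fun t : ℝ => t ^ (-4 : ℝ))
    · exact integrableOn_Ioi_rpow_of_lt (by norm_num) one_pos
    · exact (meas_main lam nu).restrict
    · filter_upwards [ae_restrict_mem measurableSet_Ioi] with t ht
      have ht0 : (0:ℝ) < t := lt_trans one_pos ht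
      have he : t ^ (-4:ℝ) = 1 / t ^ 4 := by
        rw [Real.rpow_neg ht0.le, one_div, show (4:ℝ) = ((4:ℕ):ℝ) by norm_num,
          Real.rpow_natCast]
      rw [he]
      exact le_trans (bound_main lam nu hlam t ht0) (min_le_right _ _)

lemma integral_comb5 {μ : Measure ℝ} {f1 f2 f3 f4 f5 : ℝ → ℝ} (h1 : Integrable f1 μ)
    (h2 : Integrable f2 μ) (h3 : Integrable f3 μ) (h4 : Integrable f4 μ)
    (h5 : Integrable f5 μ) (a1 a2 a3 a4 a5 : ℝ) :
    ∫ x, (a1 * f1 x - a2 * f2 x - a3 * f3 x + a4 * f4 x + a5 * f5 x) ∂μ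
      = a1 * ∫ x, f1 x ∂μ - a2 * ∫ x, f2 x ∂μ - a3 * ∫ x, f3 x ∂μ
        + a4 * ∫ x, f4 x ∂μ + a5 * ∫ x, f5 x ∂μ := by
  have g1 : Integrable (fun x => a1 * f1 x) μ := h1.const_mul _
  have g2 : Integrable (fun x => a2 * f2 x) μ := h2.const_mul _
  have g3 : Integrable (fun x => a3 * f3 x) μ := h3.const_mul _
  have g4 : Integrable (fun x => a4 * f4 x) μ := h4.const_mul _
  have g5 : Integrable (fun x => a5 * f5 x) μ := h5.const_mul _
  have g12 : Integrable (fun x => a1 * f1 x - a2 * f2 x) μ := g1.sub g2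
  have g123 : Integrable (fun x => a1 * f1 x - a2 * f2 x - a3 * f3 x) μ := g12.sub g3
  have g1234 : Integrable (fun x => a1 * f1 x - a2 * f2 x - a3 * f3 x + a4 * f4 x) μ :=
    g123.add g4
  rw [integral_add g1234 g5, integral_add g123 g4, integral_sub g12 g3, integral_sub g1 g2,
    integral_const_mul, integral_const_mul, integral_const_mul, integral_const_mul, integral_const_mul]

lemma inner_t_integral (lam nu x : ℝ) (hx : 0 < x) :
    ∫ t in Ioi (0:ℝ), Real.sin (lam*t/4)^4 * Real.cos (nu*t) * (x^3 * Real.exp (-(t*x)))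
      = x^3 * (3/8 * (x/(x^2+nu^2)) - 1/4 * (x/(x^2+(lam/2+nu)^2))
        - 1/4 * (x/(x^2+(lam/2-nu)^2)) + 1/16 * (x/(x^2+(lam+nu)^2))
        + 1/16 * (x/(x^2+(lam-nu)^2))) := by
  have hpt : ∀ t : ℝ, Real.sin (lam*t/4)^4 * Real.cos (nu*t) * (x^3 * Real.exp (-(t*x)))
      = x^3 * (3/8 * (Real.exp (-(x*t)) * Real.cos (nu*t))
        - 1/4 * (Real.exp (-(x*t)) * Real.cos ((lam/2+nu)*t))
        - 1/4 * (Real.exp (-(x*t)) * Real.cos ((lam/2-nu)*t))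
        + 1/16 * (Real.exp (-(x*t)) * Real.cos ((lam+nu)*t))
        + 1/16 * (Real.exp (-(x*t)) * Real.cos ((lam-nu)*t))) := by
    intro t
    rw [mul_comm t x, trig_expand]
    ring
  simp_rw [hpt]
  rw [integral_const_mul]
  congr 1
  rw [integral_comb5 (integrableOn_exp_cos x nu hx) (integrableOn_exp_cos x (lam/2+nu) hx)
    (integrableOn_exp_cos x (lam/2-nu) hx) (integrableOn_exp_cos x (lam+nu) hx)
    (integrableOn_exp_cos x (lam-nu) hx),
    integral_exp_cos x nu hx, integral_exp_cos x (lam/2+nu) hx,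
    integral_exp_cos x (lam/2-nu) hx, integral_exp_cos x (lam+nu) hx,
    integral_exp_cos x (lam-nu) hx]

lemma collapse (lam nu x : ℝ) (hx : 0 < x) :
    x^3 * (3/8 * (x/(x^2+nu^2)) - 1/4 * (x/(x^2+(lam/2+nu)^2))
        - 1/4 * (x/(x^2+(lam/2-nu)^2)) + 1/16 * (x/(x^2+(lam+nu)^2))
        + 1/16 * (x/(x^2+(lam-nu)^2)))
      = 3/8 * (nu^4/(x^2+nu^2)) - 1/4 * ((lam/2+nu)^4/(x^2+(lam/2+nu)^2))
        - 1/4 * ((lam/2-nu)^4/(x^2+(lam/2-nu)^2)) + 1/16 * ((lam+nu)^4/(x^2+(lam+nu)^2))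
        + 1/16 * ((lam-nu)^4/(x^2+(lam-nu)^2)) := by
  have h1 : x^2+nu^2 > 0 := by positivity
  have h2 : x^2+(lam/2+nu)^2 > 0 := by positivity
  have h3 : x^2+(lam/2-nu)^2 > 0 := by positivity
  have h4 : x^2+(lam+nu)^2 > 0 := by positivity
  have h5 : x^2+(lam-nu)^2 > 0 := by positivity
  field_simp
  ring

lemma outer_x_integral (lam nu : ℝ) :
    ∫ x in Ioi (0:ℝ), (3/8 * (nu^4/(x^2+nu^2)) - 1/4 * ((lam/2+nu)^4/(x^2+(lam/2+nu)^2))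
        - 1/4 * ((lam/2-nu)^4/(x^2+(lam/2-nu)^2)) + 1/16 * ((lam+nu)^4/(x^2+(lam+nu)^2))
        + 1/16 * ((lam-nu)^4/(x^2+(lam-nu)^2)))
      = π/2 * (3/8 * |nu|^3 - 1/4 * |lam/2+nu|^3 - 1/4 * |lam/2-nu|^3
        + 1/16 * |lam+nu|^3 + 1/16 * |lam-nu|^3) := by
  rw [integral_comb5 (integrableOn_inv_sq_add nu) (integrableOn_inv_sq_add (lam/2+nu))
    (integrableOn_inv_sq_add (lam/2-nu)) (integrableOn_inv_sq_add (lam+nu))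
    (integrableOn_inv_sq_add (lam-nu)),
    integral_inv_sq_add nu, integral_inv_sq_add (lam/2+nu), integral_inv_sq_add (lam/2-nu),
    integral_inv_sq_add (lam+nu), integral_inv_sq_add (lam-nu)]
  ring
set_option maxHeartbeats 1000000 in
lemma fubini_core (lam nu : ℝ) (hlam : 0 < lam) :
    Integrable (fun p : ℝ × ℝ =>
        Real.sin (lam*p.1/4)^4 * Real.cos (nu*p.1) * (p.2^3 * Real.exp (-(p.1*p.2))))
      ((volume.restrict (Ioi 0)).prod (volume.restrict (Ioi 0))) := by
  have hcont : Continuous (fun p : ℝ × ℝ =>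
      Real.sin (lam*p.1/4)^4 * Real.cos (nu*p.1) * (p.2^3 * Real.exp (-(p.1*p.2)))) := by
    fun_prop
  rw [integrable_prod_iff hcont.aestronglyMeasurable]
  constructor
  · filter_upwards [ae_restrict_mem measurableSet_Ioi] with t ht
    exact (integrableOn_gamma t ht).const_mul _
  · apply Integrable.congr (((integrableOn_main lam nu hlam).norm.const_mul 6))
    filter_upwards [ae_restrict_mem measurableSet_Ioi] with t ht
    have ht0 : (0:ℝ) < t := ht
    have ht4 : (0:ℝ) < t^4 := by positivity
    have h1 : ∫ x in Ioi (0:ℝ), ‖Real.sin (lam*t/4)^4 * Real.cos (nu*t) * (x^3 * Real.exp (-(t*x)))‖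
        = ∫ x in Ioi (0:ℝ), |Real.sin (lam*t/4)^4 * Real.cos (nu*t)| * (x^3 * Real.exp (-(t*x))) := by
      apply setIntegral_congr_fun measurableSet_Ioi
      intro x hx
      have hx0 : (0:ℝ) < x := hx
      beta_reduce
      rw [Real.norm_eq_abs, abs_mul, abs_of_pos (show (0:ℝ) < x^3 * Real.exp (-(t*x)) by positivity)]
    rw [h1, integral_const_mul, integral_gamma t ht0, Real.norm_eq_abs, abs_div,
      abs_of_pos ht4, abs_mul]
    field_simp

set_option maxHeartbeats 1000000 in
lemma integral_jackson (lam nu : ℝ) (hlam : 0 < lam) :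
    ∫ t in Ioi (0:ℝ), Real.sin (lam*t/4)^4 * Real.cos (nu*t) / t^4
      = π/12 * (3/8 * |nu|^3 - 1/4 * |lam/2+nu|^3 - 1/4 * |lam/2-nu|^3
        + 1/16 * |lam+nu|^3 + 1/16 * |lam-nu|^3) := by
  calc ∫ t in Ioi (0:ℝ), Real.sin (lam*t/4)^4 * Real.cos (nu*t) / t^4
      = ∫ t in Ioi (0:ℝ), (1/6) * ∫ x in Ioi (0:ℝ),
          Real.sin (lam*t/4)^4 * Real.cos (nu*t) * (x^3 * Real.exp (-(t*x))) := by
        apply setIntegral_congr_fun measurableSet_Ioi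
        intro t ht
        have ht0 : (0:ℝ) < t := ht
        beta_reduce
        rw [integral_const_mul, integral_gamma t ht0]
        field_simp
    _ = (1/6) * ∫ t in Ioi (0:ℝ), ∫ x in Ioi (0:ℝ),
          Real.sin (lam*t/4)^4 * Real.cos (nu*t) * (x^3 * Real.exp (-(t*x))) := by
        rw [integral_const_mul]
    _ = (1/6) * ∫ x in Ioi (0:ℝ), ∫ t in Ioi (0:ℝ),
          Real.sin (lam*t/4)^4 * Real.cos (nu*t) * (x^3 * Real.exp (-(t*x))) := by
        congr 1
        exact integral_integral_swap (fubini_core lam nu hlam)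
    _ = (1/6) * ∫ x in Ioi (0:ℝ), (3/8 * (nu^4/(x^2+nu^2))
          - 1/4 * ((lam/2+nu)^4/(x^2+(lam/2+nu)^2))
          - 1/4 * ((lam/2-nu)^4/(x^2+(lam/2-nu)^2))
          + 1/16 * ((lam+nu)^4/(x^2+(lam+nu)^2))
          + 1/16 * ((lam-nu)^4/(x^2+(lam-nu)^2))) := by
        congr 1
        apply setIntegral_congr_fun measurableSet_Ioi
        intro x hx
        have hx0 : (0:ℝ) < x := hx
        beta_reduce
        rw [inner_t_integral lam nu x hx0, collapse lam nu x hx0]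
    _ = (1/6) * (π/2 * (3/8 * |nu|^3 - 1/4 * |lam/2+nu|^3 - 1/4 * |lam/2-nu|^3
          + 1/16 * |lam+nu|^3 + 1/16 * |lam-nu|^3)) := by rw [outer_x_integral]
    _ = π/12 * (3/8 * |nu|^3 - 1/4 * |lam/2+nu|^3 - 1/4 * |lam/2-nu|^3
          + 1/16 * |lam+nu|^3 + 1/16 * |lam-nu|^3) := by ring

set_option maxHeartbeats 1000000 in
theorem jackson_cosine_transform_aux (lam : ℝ) (hlam : 0 < lam) (nu : ℝ) :
    (|nu| ≤ lam / 2 →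
      (3 / (4 * Real.pi)) * ∫ t in Set.Ioi (0 : ℝ),
        (Real.sin (lam * t / 4)) ^ 4 / (lam ^ 3 * (t / 4) ^ 4) * Real.cos (nu * t)
        = 1 - 6 * (nu / lam) ^ 2 + 6 * (|nu| / lam) ^ 3) ∧
    (lam / 2 ≤ |nu| → |nu| ≤ lam →
      (3 / (4 * Real.pi)) * ∫ t in Set.Ioi (0 : ℝ),
        (Real.sin (lam * t / 4)) ^ 4 / (lam ^ 3 * (t / 4) ^ 4) * Real.cos (nu * t)
        = 2 * (1 - |nu| / lam) ^ 3) ∧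
    (lam ≤ |nu| →
      (3 / (4 * Real.pi)) * ∫ t in Set.Ioi (0 : ℝ),
        (Real.sin (lam * t / 4)) ^ 4 / (lam ^ 3 * (t / 4) ^ 4) * Real.cos (nu * t)
        = 0) := by
  have hlam0 : lam ≠ 0 := ne_of_gt hlam
  have hkey : ∫ t in Set.Ioi (0 : ℝ),
      (Real.sin (lam * t / 4)) ^ 4 / (lam ^ 3 * (t / 4) ^ 4) * Real.cos (nu * t)
      = (256/lam^3) * (π/12 * (3/8 * |nu|^3 - 1/4 * |lam/2+nu|^3 - 1/4 * |lam/2-nu|^3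
        + 1/16 * |lam+nu|^3 + 1/16 * |lam-nu|^3)) := by
    have h1 : ∫ t in Set.Ioi (0 : ℝ),
        (Real.sin (lam * t / 4)) ^ 4 / (lam ^ 3 * (t / 4) ^ 4) * Real.cos (nu * t)
        = ∫ t in Set.Ioi (0 : ℝ),
          (256/lam^3) * (Real.sin (lam*t/4)^4 * Real.cos (nu*t) / t^4) := by
      apply setIntegral_congr_fun measurableSet_Ioi
      intro t ht
      have ht0 : (0:ℝ) < t := ht
      have ht' : t ≠ 0 := ne_of_gt ht0
      beta_reduce
      field_simp
      ring
    rw [h1, integral_const_mul, integral_jackson lam nu hlam]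
  rw [hkey]
  have hpi : (π : ℝ) ≠ 0 := Real.pi_ne_zero
  have hconst : ∀ X : ℝ, 3/(4*π)*((256/lam^3)*(π/12*X)) = 16/lam^3 * X := by
    intro X
    field_simp
    ring
  rw [hconst]
  refine ⟨fun h1 => ?_, fun h1 h2 => ?_, fun h1 => ?_⟩
  · rcases abs_cases nu with ⟨he, hs⟩ | ⟨he, hs⟩ <;> rw [he] at h1 ⊢ <;>
    · rw [abs_of_nonneg (by linarith : (0:ℝ) ≤ lam/2+nu),
        abs_of_nonneg (by linarith : (0:ℝ) ≤ lam/2-nu),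
        abs_of_nonneg (by linarith : (0:ℝ) ≤ lam+nu),
        abs_of_nonneg (by linarith : (0:ℝ) ≤ lam-nu)]
      field_simp
      ring
  · rcases abs_cases nu with ⟨he, hs⟩ | ⟨he, hs⟩ <;> rw [he] at h1 h2 ⊢
    · rw [abs_of_nonneg (by linarith : (0:ℝ) ≤ lam/2+nu),
        abs_of_nonpos (by linarith : lam/2-nu ≤ 0),
        abs_of_nonneg (by linarith : (0:ℝ) ≤ lam+nu),
        abs_of_nonneg (by linarith : (0:ℝ) ≤ lam-nu)]
      field_simp
      ring
    · rw [abs_of_nonpos (by linarith : lam/2+nu ≤ 0),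
        abs_of_nonneg (by linarith : (0:ℝ) ≤ lam/2-nu),
        abs_of_nonneg (by linarith : (0:ℝ) ≤ lam+nu),
        abs_of_nonneg (by linarith : (0:ℝ) ≤ lam-nu)]
      field_simp
      ring
  · rcases abs_cases nu with ⟨he, hs⟩ | ⟨he, hs⟩ <;> rw [he] at h1 ⊢
    · rw [abs_of_nonneg (by linarith : (0:ℝ) ≤ lam/2+nu),
        abs_of_nonpos (by linarith : lam/2-nu ≤ 0),
        abs_of_nonneg (by linarith : (0:ℝ) ≤ lam+nu),
        abs_of_nonpos (by linarith : lam-nu ≤ 0)]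
      field_simp
      ring
    · rw [abs_of_nonpos (by linarith : lam/2+nu ≤ 0),
        abs_of_nonneg (by linarith : (0:ℝ) ≤ lam/2-nu),
        abs_of_nonpos (by linarith : lam+nu ≤ 0),
        abs_of_nonneg (by linarith : (0:ℝ) ≤ lam-nu)]
      field_simp
      ring

end JacksonAux

/-- The Fourier cosine transform of the Jackson kernel is the cubic spline
`E^λ_J`: `(3/(4π)) ∫_0^∞ sin⁴(λt/4)/(λ³(t/4)⁴) cos(νt) dt` equals
`1 - 6(ν/λ)² + 6(|ν|/λ)³` for `|ν| ≤ λ/2`, equals `2(1 - |ν|/λ)³` for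
`λ/2 ≤ |ν| ≤ λ`, and equals `0` for `|ν| ≥ λ`. -/
theorem jackson_cosine_transform (lam : ℝ) (hlam : 0 < lam) (nu : ℝ) :
    (|nu| ≤ lam / 2 →
      (3 / (4 * Real.pi)) * ∫ t in Set.Ioi (0 : ℝ),
        (Real.sin (lam * t / 4)) ^ 4 / (lam ^ 3 * (t / 4) ^ 4) * Real.cos (nu * t)
        = 1 - 6 * (nu / lam) ^ 2 + 6 * (|nu| / lam) ^ 3) ∧
    (lam / 2 ≤ |nu| → |nu| ≤ lam →
      (3 / (4 * Real.pi)) * ∫ t in Set.Ioi (0 : ℝ),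
        (Real.sin (lam * t / 4)) ^ 4 / (lam ^ 3 * (t / 4) ^ 4) * Real.cos (nu * t)
        = 2 * (1 - |nu| / lam) ^ 3) ∧
    (lam ≤ |nu| →
      (3 / (4 * Real.pi)) * ∫ t in Set.Ioi (0 : ℝ),
        (Real.sin (lam * t / 4)) ^ 4 / (lam ^ 3 * (t / 4) ^ 4) * Real.cos (nu * t)
        = 0) :=
  JacksonAux.jackson_cosine_transform_aux lam hlam nu
end

section
/- Let a, b, c be real constants with a+c > 1, b+c > 1, and a+b+c > 2. Then \phi(y,v) = (|y|+1)^{-a} (|v|+1)^{-b} (|y+v|+1)^{-c} is integrable over the first quadrant \{y > 0, v > 0\}; in particular the condition a+b > 1 may be dropped for integrability over \mathbb{R}_+^2. -/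
open MeasureTheory Set Real

private lemma aux_one_dim {p : ℝ} (hp : 1 < p) :
    IntegrableOn (fun x : ℝ => (x + 1) ^ (-p)) (Set.Ioi (0 : ℝ)) := by
  have h1 : IntegrableOn (fun x : ℝ => (x + 1) ^ (-p)) (Set.Ioc (0:ℝ) 1) := by
    have hc : ContinuousOn (fun x : ℝ => (x + 1) ^ (-p)) (Set.Icc (0:ℝ) 1) := by
      apply ContinuousOn.rpow_const (by fun_prop)
      intro x hx
      left
      nlinarith [hx.1]
    exact (hc.integrableOn_compact isCompact_Icc).mono_set Set.Ioc_subset_Icc_self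
  have h2 : IntegrableOn (fun x : ℝ => (x + 1) ^ (-p)) (Set.Ioi (1:ℝ)) := by
    have hbase : IntegrableOn (fun x : ℝ => x ^ (-p)) (Set.Ioi (1:ℝ)) :=
      integrableOn_Ioi_rpow_of_lt (by linarith) zero_lt_one
    refine MeasureTheory.Integrable.mono hbase ?_ ?_
    · apply ContinuousOn.aestronglyMeasurable ?_ measurableSet_Ioi
      apply ContinuousOn.rpow_const (by fun_prop)
      intro x hx
      left
      have : (1:ℝ) < x := hx
      linarith
    · filter_upwards [ae_restrict_mem measurableSet_Ioi] with x hx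
      have hx1 : (1:ℝ) < x := hx
      rw [Real.norm_of_nonneg (Real.rpow_nonneg (by linarith) _),
        Real.norm_of_nonneg (Real.rpow_nonneg (by linarith) _)]
      exact Real.rpow_le_rpow_of_nonpos (by linarith) (by linarith) (by linarith)
  have := h1.union h2
  rwa [Set.Ioc_union_Ioi_eq_Ioi zero_le_one] at this

private lemma aux_key (t : ℝ) {y v : ℝ} (hy : 0 ≤ y) (hv : 0 ≤ v) :
    (y + v + 1) ^ (-t) ≤ (y + 1) ^ (-t) * (v + 1) ^ (-(min t 0)) := by
  rcases le_or_gt 0 t with ht | ht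
  · rw [min_eq_right ht, neg_zero, Real.rpow_zero, mul_one]
    exact Real.rpow_le_rpow_of_nonpos (by linarith) (by linarith) (by linarith)
  · rw [min_eq_left ht.le, ← Real.mul_rpow (by linarith) (by linarith)]
    apply Real.rpow_le_rpow (by linarith) (by nlinarith) (by linarith)

/-- If `a+c > 1`, `b+c > 1` and `a+b+c > 2`, then
`φ(y,v) = (|y|+1)^{-a} (|v|+1)^{-b} (|y+v|+1)^{-c}` is integrable over the
first quadrant; the condition `a+b > 1` may be dropped there. -/
theorem phi_integrableOn_quadrant (a b c : ℝ)
    (hac : 1 < a + c) (hbc : 1 < b + c) (habc : 2 < a + b + c) :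
    MeasureTheory.IntegrableOn
      (fun p : ℝ × ℝ =>
        (|p.1| + 1) ^ (-a) * (|p.2| + 1) ^ (-b) * (|p.1 + p.2| + 1) ^ (-c))
      (Set.Ioi (0 : ℝ) ×ˢ Set.Ioi (0 : ℝ)) := by
  obtain ⟨c₁, c₂, hsum, hca, hcb⟩ :
      ∃ c₁ c₂ : ℝ, c₁ + c₂ = c ∧ 1 - a < c₁ ∧ 1 - b < c₂ :=
    ⟨(c - a + b) / 2, (c - b + a) / 2, by ring, by linarith, by linarith⟩
  set p : ℝ := a + c₁ + min c₂ 0 with hpdef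
  set q : ℝ := b + c₂ + min c₁ 0 with hqdef
  have hp : 1 < p := by
    rcases min_cases c₂ 0 with ⟨h1, h2⟩ | ⟨h1, h2⟩ <;> rw [hpdef, h1] <;> linarith
  have hq : 1 < q := by
    rcases min_cases c₁ 0 with ⟨h1, h2⟩ | ⟨h1, h2⟩ <;> rw [hqdef, h1] <;> linarith
  -- the dominating function
  have hg : IntegrableOn
      (fun z : ℝ × ℝ => (z.1 + 1) ^ (-p) * (z.2 + 1) ^ (-q))
      (Set.Ioi (0 : ℝ) ×ˢ Set.Ioi (0 : ℝ)) := by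
    have := (aux_one_dim hp).mul_prod (aux_one_dim hq)
    rwa [Measure.prod_restrict, ← Measure.volume_eq_prod] at this
  refine MeasureTheory.Integrable.mono hg ?_ ?_
  · apply Continuous.aestronglyMeasurable
    have h1 : Continuous fun z : ℝ × ℝ => (|z.1| + 1) ^ (-a) := by
      apply Continuous.rpow_const (by fun_prop)
      intro x; left; positivity
    have h2 : Continuous fun z : ℝ × ℝ => (|z.2| + 1) ^ (-b) := by
      apply Continuous.rpow_const (by fun_prop)
      intro x; left; positivity
    have h3 : Continuous fun z : ℝ × ℝ => (|z.1 + z.2| + 1) ^ (-c) := by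
      apply Continuous.rpow_const (by fun_prop)
      intro x; left; positivity
    exact (h1.mul h2).mul h3
  · filter_upwards [ae_restrict_mem (measurableSet_Ioi.prod measurableSet_Ioi)] with z hz
    obtain ⟨hy, hv⟩ := hz
    have hy' : 0 < z.1 := hy
    have hv' : 0 < z.2 := hv
    set y := z.1
    set v := z.2
    rw [Real.norm_of_nonneg (by positivity), Real.norm_of_nonneg (by positivity)]
    rw [abs_of_pos hy', abs_of_pos hv', abs_of_pos (by linarith : (0:ℝ) < y + v)]
    have hsplit : (y + v + 1) ^ (-c) = (y + v + 1) ^ (-c₁) * (y + v + 1) ^ (-c₂) := by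
      rw [← Real.rpow_add (by linarith), ← neg_add, hsum]
    have k1 : (y + v + 1) ^ (-c₁) ≤ (y + 1) ^ (-c₁) * (v + 1) ^ (-(min c₁ 0)) :=
      aux_key c₁ hy'.le hv'.le
    have k2 : (y + v + 1) ^ (-c₂) ≤ (v + 1) ^ (-c₂) * (y + 1) ^ (-(min c₂ 0)) := by
      have := aux_key c₂ hv'.le hy'.le
      rwa [show v + y + 1 = y + v + 1 by ring] at this
    have e1 : (y + 1) ^ (-p) = (y + 1) ^ (-a) * (y + 1) ^ (-c₁) * (y + 1) ^ (-(min c₂ 0)) := by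
      rw [← Real.rpow_add (by linarith), ← Real.rpow_add (by linarith), hpdef]
      ring_nf
    have e2 : (v + 1) ^ (-q) = (v + 1) ^ (-b) * (v + 1) ^ (-c₂) * (v + 1) ^ (-(min c₁ 0)) := by
      rw [← Real.rpow_add (by linarith), ← Real.rpow_add (by linarith), hqdef]
      ring_nf
    calc (y + 1) ^ (-a) * (v + 1) ^ (-b) * (y + v + 1) ^ (-c)
        = (y + 1) ^ (-a) * (v + 1) ^ (-b) *
            ((y + v + 1) ^ (-c₁) * (y + v + 1) ^ (-c₂)) := by rw [hsplit]
      _ ≤ (y + 1) ^ (-a) * (v + 1) ^ (-b) *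
            (((y + 1) ^ (-c₁) * (v + 1) ^ (-(min c₁ 0))) *
              ((v + 1) ^ (-c₂) * (y + 1) ^ (-(min c₂ 0)))) := by
          apply mul_le_mul_of_nonneg_left
          · exact mul_le_mul k1 k2 (Real.rpow_nonneg (by linarith) _)
              (by positivity)
          · positivity
      _ = (y + 1) ^ (-p) * (v + 1) ^ (-q) := by rw [e1, e2]; ring
end

section
/- For fixed \sigma with 1/2 < \sigma < 1, the double sum over zeros of zeta in (7.2) tends to zero: \sum_{0 < \gamma'' < R, \gamma > R} (\gamma \gamma'')^{1/2 - \sigma} (\gamma - \gamma'' + 1)^{2\sigma - 7/2} \to 0 as R \to \infty, where \gamma, \gamma'' run over the positive imaginary parts of nontrivial zeros of the Riemann zeta function. -/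
open Filter Set
open scoped Topology ENNReal
open scoped Topology

/-- The set of nontrivial zeros of `ζ` in the upper half-plane. -/
def upperZetaZeros : Set ℂ :=
  {z : ℂ | riemannZeta z = 0 ∧ 0 < z.re ∧ z.re < 1 ∧ 0 < z.im}

lemma upperZetaZeros_finite_of_im_le (T : ℝ) :
    {z : ℂ | z ∈ upperZetaZeros ∧ z.im ≤ T}.Finite := by
  by_contra hinf
  replace hinf : {z : ℂ | z ∈ upperZetaZeros ∧ z.im ≤ T}.Infinite := hinf
  -- the set is contained in a compact rectangle
  set K : Set ℂ := {z : ℂ | 0 ≤ z.re ∧ z.re ≤ 1 ∧ 0 ≤ z.im ∧ z.im ≤ max T 0} with hK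
  have hKcl : IsClosed K := by
    apply IsClosed.inter (isClosed_le continuous_const Complex.continuous_re)
    apply IsClosed.inter (isClosed_le Complex.continuous_re continuous_const)
    exact IsClosed.inter (isClosed_le continuous_const Complex.continuous_im)
      (isClosed_le Complex.continuous_im continuous_const)
  have hKb : Bornology.IsBounded K := by
    apply Bornology.IsBounded.subset (Metric.isBounded_closedBall (x := (0:ℂ))
      (r := 1 + (max T 0) + 1))
    intro z hz
    simp only [Metric.mem_closedBall, dist_zero_right]
    calc ‖z‖ ≤ |z.re| + |z.im| := by exact Complex.norm_le_abs_re_add_abs_im z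
    _ ≤ 1 + (max T 0) + 1 := by
        rw [abs_of_nonneg hz.1, abs_of_nonneg hz.2.2.1]; linarith [hz.2.1, hz.2.2.2]
  have hKc : IsCompact K := Metric.isCompact_of_isClosed_isBounded hKcl hKb
  have hsub : {z : ℂ | z ∈ upperZetaZeros ∧ z.im ≤ T} ⊆ K := by
    rintro z ⟨⟨_, h1, h2, h3⟩, h4⟩
    exact ⟨h1.le, h2.le, h3.le, le_max_of_le_left h4⟩
  obtain ⟨z₀, -, hz₀⟩ := hinf.exists_accPt_of_subset_isCompact hKc hsub
  have hfreq : ∃ᶠ z in 𝓝[≠] z₀, riemannZeta z = 0 := by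
    have : (𝓝[≠] z₀ ⊓ 𝓟 {z : ℂ | z ∈ upperZetaZeros ∧ z.im ≤ T}).NeBot := hz₀
    have h := Filter.inf_principal_neBot_iff.mp this
    rw [Filter.frequently_iff]
    intro U hU
    obtain ⟨z, hz1, hz2⟩ := h U hU
    exact ⟨z, hz1, hz2.1.1⟩
  by_cases h1 : z₀ = 1
  · -- zeros accumulate at the pole: contradiction with residue
    subst h1
    have hres := riemannZeta_residue_one
    have hne : (𝓝[≠] (1:ℂ) ⊓ 𝓟 {z : ℂ | riemannZeta z = 0}).NeBot := by
      refine Filter.inf_principal_neBot_iff.mpr ?_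
      intro U hU
      obtain ⟨z, hz1, hz2⟩ := Filter.frequently_iff.mp hfreq hU
      exact ⟨z, hz1, hz2⟩
    have htend : Tendsto (fun s : ℂ => (s - 1) * riemannZeta s)
        (𝓝[≠] (1:ℂ) ⊓ 𝓟 {z : ℂ | riemannZeta z = 0}) (𝓝 1) :=
      hres.mono_left inf_le_left
    have htend0 : Tendsto (fun s : ℂ => (s - 1) * riemannZeta s)
        (𝓝[≠] (1:ℂ) ⊓ 𝓟 {z : ℂ | riemannZeta z = 0}) (𝓝 0) := by
      apply Tendsto.congr' _ tendsto_const_nhds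
      filter_upwards [Filter.mem_inf_of_right (Filter.mem_principal_self _)] with z hz
      simp [Set.mem_setOf_eq.mp hz]
    have := tendsto_nhds_unique htend0 htend
    exact zero_ne_one this
  · -- identity theorem on ℂ \ {1}
    have hU : IsOpen ({(1:ℂ)}ᶜ : Set ℂ) := isOpen_compl_singleton
    have han : AnalyticOnNhd ℂ riemannZeta ({(1:ℂ)}ᶜ : Set ℂ) :=
      DifferentiableOn.analyticOnNhd
        (fun z hz => (differentiableAt_riemannZeta hz).differentiableWithinAt) hU
    have hconn : IsPreconnected ({(1:ℂ)}ᶜ : Set ℂ) :=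
      (isConnected_compl_singleton_of_one_lt_rank
        (by simp) 1).isPreconnected
    have heq := han.eqOn_zero_of_preconnected_of_frequently_eq_zero hconn h1 hfreq
    have h2 : riemannZeta 2 = 0 := heq (by norm_num : (2:ℂ) ∈ ({(1:ℂ)}ᶜ : Set ℂ))
    rw [riemannZeta_two] at h2
    have : (Real.pi : ℂ) ≠ 0 := by
      simp [Complex.ofReal_ne_zero, Real.pi_ne_zero]
    field_simp at h2
    simp [Real.pi_ne_zero] at h2


lemma tsum_comp_floor (g : ℕ → ℝ≥0∞)
    (hfin : ∀ n : ℕ, {z : ℂ | z ∈ upperZetaZeros ∧ ⌊z.im⌋₊ = n}.Finite) :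
    ∑' ρ : upperZetaZeros, g ⌊(ρ : ℂ).im⌋₊
      = ∑' n : ℕ, (Nat.card {z : ℂ | z ∈ upperZetaZeros ∧ ⌊z.im⌋₊ = n}) * g n := by
  classical
  set φ : upperZetaZeros → ℕ := fun ρ => ⌊(ρ : ℂ).im⌋₊ with hφ
  have h0 : ∑' ρ : upperZetaZeros, g (φ ρ)
      = ∑' x : (Σ n : ℕ, {ρ : upperZetaZeros // φ ρ = n}), g (φ x.2.val) :=
    ((Equiv.sigmaFiberEquiv φ).tsum_eq (fun ρ => g (φ ρ))).symm
  rw [h0, ENNReal.tsum_sigma']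
  refine tsum_congr fun n => ?_
  have hfin' : Finite {ρ : upperZetaZeros // φ ρ = n} := by
    have := (hfin n).to_subtype
    exact Finite.of_injective
      (fun x => (⟨x.val.val, x.val.prop, x.prop⟩ :
        {z : ℂ | z ∈ upperZetaZeros ∧ ⌊z.im⌋₊ = n}))
      (by intro x y h; simp only [Subtype.mk.injEq] at h
          exact Subtype.ext (Subtype.ext h))
  have hcard : (Nat.card {ρ : upperZetaZeros // φ ρ = n} : ℝ≥0∞)
      = Nat.card {z : ℂ | z ∈ upperZetaZeros ∧ ⌊z.im⌋₊ = n} := by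
    congr 1
    exact Nat.card_congr
      (Equiv.subtypeSubtypeEquivSubtypeInter (· ∈ upperZetaZeros) (fun z => ⌊z.im⌋₊ = n))
  cases nonempty_fintype {ρ : upperZetaZeros // φ ρ = n}
  calc ∑' x : {ρ : upperZetaZeros // φ ρ = n}, g (φ x.val)
      = ∑' x : {ρ : upperZetaZeros // φ ρ = n}, g n :=
        tsum_congr fun x => by rw [x.prop]
    _ = ∑ _x : {ρ : upperZetaZeros // φ ρ = n}, g n := tsum_fintype _
    _ = (Fintype.card {ρ : upperZetaZeros // φ ρ = n}) • g n := by
        rw [Finset.sum_const, Finset.card_univ]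
    _ = (Nat.card {ρ : upperZetaZeros // φ ρ = n} : ℝ≥0∞) * g n := by
        rw [Nat.card_eq_fintype_card, nsmul_eq_mul]
    _ = _ := by rw [hcard]

lemma exists_slice_card_bound (A : ℝ)
    (hA : ∀ T : ℝ, 2 ≤ T →
      (Nat.card {z : ℂ | z ∈ upperZetaZeros ∧ T < z.im ∧ z.im ≤ T + 1} : ℝ) ≤ A * Real.log T)
    (ε : ℝ) (hε : 0 < ε) :
    ∃ K : ℝ, 0 ≤ K ∧ ∀ n : ℕ,
      (Nat.card {z : ℂ | z ∈ upperZetaZeros ∧ ⌊z.im⌋₊ = n} : ℝ) ≤ K * ((n : ℝ) + 1) ^ ε := by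
  have hA0 : 0 ≤ A := by
    have h2 := hA 2 le_rfl
    have h0 : (0:ℝ) ≤ A * Real.log 2 := le_trans (Nat.cast_nonneg _) h2
    exact (mul_nonneg_iff_of_pos_right (Real.log_pos one_lt_two)).mp h0
  set M : ℝ := (Nat.card {z : ℂ | z ∈ upperZetaZeros ∧ z.im ≤ 3} : ℝ) with hM
  have hM0 : 0 ≤ M := Nat.cast_nonneg _
  refine ⟨2*A/ε + M, by positivity, fun n => ?_⟩
  have hone : (1:ℝ) ≤ ((n:ℝ)+1)^ε := by
    calc (1:ℝ) = 1 ^ ε := (Real.one_rpow ε).symm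
    _ ≤ ((n:ℝ)+1)^ε :=
      Real.rpow_le_rpow zero_le_one (by linarith [Nat.cast_nonneg (α := ℝ) n]) hε.le
  have hrnn : (0:ℝ) ≤ ((n:ℝ)+1)^ε := by positivity
  by_cases h3 : 3 ≤ n
  · have hn3 : (3:ℝ) ≤ (n:ℝ) := by exact_mod_cast h3
    have hsub : {z : ℂ | z ∈ upperZetaZeros ∧ ⌊z.im⌋₊ = n}
        ⊆ {z : ℂ | z ∈ upperZetaZeros ∧ ((n:ℝ) - 1/2) < z.im ∧ z.im ≤ ((n:ℝ) - 1/2) + 1}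
          ∪ {z : ℂ | z ∈ upperZetaZeros ∧ ((n:ℝ) + 1/2) < z.im ∧ z.im ≤ ((n:ℝ) + 1/2) + 1} := by
      rintro z ⟨hz, hfl⟩
      have him : 0 ≤ z.im := hz.2.2.2.le
      rw [Nat.floor_eq_iff him] at hfl
      obtain ⟨h1, h2⟩ := hfl
      by_cases hc : z.im ≤ (n:ℝ) + 1/2
      · exact Or.inl ⟨hz, by linarith, by linarith⟩
      · exact Or.inr ⟨hz, by linarith, by linarith⟩
    have hfin1 : {z : ℂ | z ∈ upperZetaZeros ∧ ((n:ℝ) - 1/2) < z.im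
        ∧ z.im ≤ ((n:ℝ) - 1/2) + 1}.Finite :=
      (upperZetaZeros_finite_of_im_le (((n:ℝ) - 1/2) + 1)).subset
        (fun z hz => ⟨hz.1, hz.2.2⟩)
    have hfin2 : {z : ℂ | z ∈ upperZetaZeros ∧ ((n:ℝ) + 1/2) < z.im
        ∧ z.im ≤ ((n:ℝ) + 1/2) + 1}.Finite :=
      (upperZetaZeros_finite_of_im_le (((n:ℝ) + 1/2) + 1)).subset
        (fun z hz => ⟨hz.1, hz.2.2⟩)
    have hcard : (Nat.card {z : ℂ | z ∈ upperZetaZeros ∧ ⌊z.im⌋₊ = n} : ℝ)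
        ≤ (Nat.card {z : ℂ | z ∈ upperZetaZeros ∧ ((n:ℝ) - 1/2) < z.im
            ∧ z.im ≤ ((n:ℝ) - 1/2) + 1} : ℝ)
          + (Nat.card {z : ℂ | z ∈ upperZetaZeros ∧ ((n:ℝ) + 1/2) < z.im
            ∧ z.im ≤ ((n:ℝ) + 1/2) + 1} : ℝ) := by
      rw [← Nat.cast_add]
      apply Nat.cast_le.mpr
      rw [Nat.card_coe_set_eq, Nat.card_coe_set_eq, Nat.card_coe_set_eq]
      calc {z : ℂ | z ∈ upperZetaZeros ∧ ⌊z.im⌋₊ = n}.ncard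
          ≤ ({z : ℂ | z ∈ upperZetaZeros ∧ ((n:ℝ) - 1/2) < z.im ∧ z.im ≤ ((n:ℝ) - 1/2) + 1}
            ∪ {z : ℂ | z ∈ upperZetaZeros ∧ ((n:ℝ) + 1/2) < z.im
              ∧ z.im ≤ ((n:ℝ) + 1/2) + 1}).ncard :=
            Set.ncard_le_ncard hsub (hfin1.union hfin2)
        _ ≤ _ := Set.ncard_union_le _ _
    have hb1 := hA ((n:ℝ) - 1/2) (by linarith)
    have hb2 := hA ((n:ℝ) + 1/2) (by linarith)
    have hlog1 : Real.log ((n:ℝ) - 1/2) ≤ Real.log ((n:ℝ) + 1) :=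
      Real.log_le_log (by linarith) (by linarith)
    have hlog2 : Real.log ((n:ℝ) + 1/2) ≤ Real.log ((n:ℝ) + 1) :=
      Real.log_le_log (by linarith) (by linarith)
    have hlogr : Real.log ((n:ℝ)+1) ≤ ((n:ℝ)+1)^ε / ε := by
      have h1 : Real.log (((n:ℝ)+1)^ε) = ε * Real.log ((n:ℝ)+1) :=
        Real.log_rpow (by linarith) ε
      have h2 : Real.log (((n:ℝ)+1)^ε) ≤ ((n:ℝ)+1)^ε := by
        have := Real.log_le_sub_one_of_pos (x := ((n:ℝ)+1)^ε) (by positivity)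
        linarith
      rw [h1] at h2
      rw [le_div_iff₀ hε]
      linarith [mul_comm ε (Real.log ((n:ℝ)+1))]
    have hAlog : A * Real.log ((n:ℝ)+1) ≤ A * (((n:ℝ)+1)^ε / ε) :=
      mul_le_mul_of_nonneg_left hlogr hA0
    calc (Nat.card {z : ℂ | z ∈ upperZetaZeros ∧ ⌊z.im⌋₊ = n} : ℝ)
        ≤ A * Real.log ((n:ℝ) - 1/2) + A * Real.log ((n:ℝ) + 1/2) := by
          refine le_trans hcard (add_le_add hb1 hb2)
      _ ≤ 2 * A * Real.log ((n:ℝ)+1) := by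
          nlinarith [mul_le_mul_of_nonneg_left hlog1 hA0, mul_le_mul_of_nonneg_left hlog2 hA0]
      _ ≤ (2*A/ε) * ((n:ℝ)+1)^ε := by
          rw [div_mul_eq_mul_div, le_div_iff₀ hε]
          have hh := (le_div_iff₀ hε).mp hlogr
          nlinarith [mul_le_mul_of_nonneg_left hh (by linarith : (0:ℝ) ≤ 2*A)]
      _ ≤ (2*A/ε + M) * ((n:ℝ)+1)^ε := by nlinarith
  · have hsub : {z : ℂ | z ∈ upperZetaZeros ∧ ⌊z.im⌋₊ = n}
        ⊆ {z : ℂ | z ∈ upperZetaZeros ∧ z.im ≤ 3} := by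
      rintro z ⟨hz, hfl⟩
      refine ⟨hz, ?_⟩
      have h1 : z.im < ⌊z.im⌋₊ + 1 := Nat.lt_floor_add_one z.im
      rw [hfl] at h1
      have hn2 : n ≤ 2 := by omega
      have : (n:ℝ) ≤ 2 := by exact_mod_cast hn2
      linarith
    have hcard : (Nat.card {z : ℂ | z ∈ upperZetaZeros ∧ ⌊z.im⌋₊ = n} : ℝ) ≤ M := by
      rw [hM]
      apply Nat.cast_le.mpr
      rw [Nat.card_coe_set_eq, Nat.card_coe_set_eq]
      exact Set.ncard_le_ncard hsub (upperZetaZeros_finite_of_im_le 3)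
    calc (Nat.card {z : ℂ | z ∈ upperZetaZeros ∧ ⌊z.im⌋₊ = n} : ℝ)
        ≤ M := hcard
      _ ≤ M * ((n:ℝ)+1)^ε := le_mul_of_one_le_right hM0 hone
      _ ≤ (2*A/ε + M) * ((n:ℝ)+1)^ε := by
          apply mul_le_mul_of_nonneg_right _ hrnn
          nlinarith [div_nonneg (by linarith : (0:ℝ) ≤ 2*A) hε.le]

lemma exists_im_rpow_bound (e : ℝ) (he : e ≤ 0) :
    ∃ C₀ : ℝ, 1 ≤ C₀ ∧ ∀ z ∈ upperZetaZeros, z.im ^ e ≤ C₀ := by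
  classical
  have hfin := upperZetaZeros_finite_of_im_le 1
  have hnn : ∀ w ∈ hfin.toFinset, (0:ℝ) ≤ w.im ^ e := by
    intro w hw
    have hw' := (Set.Finite.mem_toFinset hfin).mp hw
    exact Real.rpow_nonneg hw'.1.2.2.2.le e
  refine ⟨1 + ∑ w ∈ hfin.toFinset, w.im ^ e, ?_, ?_⟩
  · have := Finset.sum_nonneg hnn
    linarith
  · intro z hz
    by_cases h1 : 1 ≤ z.im
    · have h := Real.rpow_le_one_of_one_le_of_nonpos h1 he
      have := Finset.sum_nonneg hnn
      linarith
    · have hzs : z ∈ hfin.toFinset :=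
        (Set.Finite.mem_toFinset hfin).mpr ⟨hz, (le_of_not_ge h1)⟩
      have h := Finset.single_le_sum hnn hzs
      linarith

set_option maxHeartbeats 2000000 in
/-- Assuming the standard zero-counting bound (`O(log T)` zeros with imaginary
part in `(T, T+1]`), for fixed `1/2 < σ < 1` the double sum
`∑_{0 < γ'' < R, γ > R} (γ γ'')^{1/2-σ} (γ - γ'' + 1)^{2σ-7/2}` over imaginary
parts of zeta's zeros tends to `0` as `R → ∞`. -/
theorem zero_double_sum_tendsto_zero (σ : ℝ) (hσ : 1 / 2 < σ) (hσ' : σ < 1)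
    (hcount : ∃ A : ℝ, ∀ T : ℝ, 2 ≤ T →
      (Nat.card {z : ℂ | z ∈ upperZetaZeros ∧ T < z.im ∧ z.im ≤ T + 1} : ℝ)
        ≤ A * Real.log T) :
    Tendsto
      (fun R : ℝ =>
        ∑' ρ : upperZetaZeros, ∑' ρ' : upperZetaZeros,
          if R < (ρ : ℂ).im ∧ (ρ' : ℂ).im < R then
            ((ρ : ℂ).im * (ρ' : ℂ).im) ^ (1 / 2 - σ) *
              ((ρ : ℂ).im - (ρ' : ℂ).im + 1) ^ (2 * σ - 7 / 2)
          else 0)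
      atTop (nhds 0) := by
  classical
  obtain ⟨A, hA⟩ := hcount
  set ε : ℝ := min (σ - 1/2) (1 - σ) / 8 with hεdef
  have hε : 0 < ε := div_pos (lt_min (by linarith) (by linarith)) (by norm_num)
  have h8a : 8 * ε ≤ σ - 1/2 := by
    have := min_le_left (σ - 1/2) (1 - σ); rw [hεdef]; linarith
  have h8b : 8 * ε ≤ 1 - σ := by
    have := min_le_right (σ - 1/2) (1 - σ); rw [hεdef]; linarith
  have hε1 : ε ≤ 1/16 := by linarith
  obtain ⟨K, hK0, hKb⟩ := exists_slice_card_bound A hA ε hε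
  obtain ⟨C₀, hC₀1, hC₀⟩ := exists_im_rpow_bound (1/2 - σ) (by linarith)
  have hC₀0 : (0:ℝ) ≤ C₀ := by linarith
  have hu0 : ∀ i : ℕ, 0 ≤ ((i:ℝ) + 1) ^ (-(1+ε)) := fun i => Real.rpow_nonneg (by positivity) _
  have hsumu : Summable (fun i : ℕ => ((i:ℝ) + 1) ^ (-(1+ε))) := by
    have h := (Real.summable_nat_rpow_inv (p := 1 + ε)).mpr (by linarith)
    have h2 := (summable_nat_add_iff 1).mpr h
    refine h2.congr fun i => ?_
    rw [show (((i+1 : ℕ)) : ℝ) = (i:ℝ) + 1 by push_cast; ring,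
      ← Real.rpow_neg (by positivity : (0:ℝ) ≤ (i:ℝ)+1)]
  set U₀ : ℝ := ∑' i : ℕ, ((i:ℝ) + 1) ^ (-(1+ε)) with hU₀def
  have hU₀0 : 0 ≤ U₀ := tsum_nonneg hu0
  set q : ℝ := max 0 (2*σ - 3/2 + 3*ε) with hqdef
  have hq0 : 0 ≤ q := le_max_left _ _
  have hqle : q ≤ σ - 1/2 - 5*ε := max_le (by linarith) (by linarith)
  set C : ℝ := C₀ * 3 ^ (-(2*σ - 7/2)) * K^2 * U₀^2 * 2 ^ (2*ε + q) with hCdef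
  have hC0 : 0 ≤ C := by positivity
  have hGnn : ∀ (R : ℝ) (ρ ρ' : upperZetaZeros), 0 ≤
      (if R < (ρ : ℂ).im ∧ (ρ' : ℂ).im < R then
        ((ρ : ℂ).im * (ρ' : ℂ).im) ^ (1/2 - σ) *
          ((ρ : ℂ).im - (ρ' : ℂ).im + 1) ^ (2*σ - 7/2)
      else 0) := by
    intro R ρ ρ'
    by_cases h : R < (ρ : ℂ).im ∧ (ρ' : ℂ).im < R
    · rw [if_pos h]
      have h1 : 0 ≤ (ρ : ℂ).im * (ρ' : ℂ).im :=
        mul_nonneg ρ.2.2.2.2.le ρ'.2.2.2.2.le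
      have h2 : 0 ≤ (ρ : ℂ).im - (ρ' : ℂ).im + 1 := by linarith [h.1, h.2]
      exact mul_nonneg (Real.rpow_nonneg h1 _) (Real.rpow_nonneg h2 _)
    · rw [if_neg h]
  have key : ∀ R : ℝ, 3 ≤ R →
      (∑' ρ : upperZetaZeros, ∑' ρ' : upperZetaZeros,
        if R < (ρ : ℂ).im ∧ (ρ' : ℂ).im < R then
          ((ρ : ℂ).im * (ρ' : ℂ).im) ^ (1 / 2 - σ) *
            ((ρ : ℂ).im - (ρ' : ℂ).im + 1) ^ (2 * σ - 7 / 2)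
        else 0) ≤ C * R ^ (-(3*ε)) := by
    intro R hR
    have hR0 : (0:ℝ) < R := by linarith
    have hR1 : (1:ℝ) ≤ R := by linarith
    set N := ⌊R⌋₊ with hNdef
    have hNle : (N:ℝ) ≤ R := Nat.floor_le hR0.le
    have hN2R : (N:ℝ) + 1 ≤ 2*R := by linarith
    set a : ℝ := -1 - 2*ε with hadef
    set b : ℝ := 2*σ - 5/2 + 2*ε with hbdef
    have ha0 : a ≤ 0 := by rw [hadef]; linarith
    have hb0 : b ≤ 0 := by rw [hbdef]; linarith
    have hp0 : 2*σ - 7/2 ≤ 0 := by linarith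
    set W₁ : ℕ → ℝ≥0∞ :=
      fun n => if N ≤ n then ENNReal.ofReal (((n:ℝ) - (N:ℝ) + 1) ^ a) else 0 with hW₁
    set W₂ : ℕ → ℝ≥0∞ :=
      fun m => if m ≤ N then ENNReal.ofReal (((N:ℝ) - (m:ℝ) + 1) ^ b) else 0 with hW₂
    set c₁ : ℝ := C₀ * R ^ (1/2 - σ) * 3 ^ (-(2*σ - 7/2)) with hc₁
    have hc₁0 : 0 ≤ c₁ := by rw [hc₁]; positivity
    -- pointwise bound
    have hpt : ∀ ρ ρ' : upperZetaZeros,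
        ENNReal.ofReal (if R < (ρ : ℂ).im ∧ (ρ' : ℂ).im < R then
            ((ρ : ℂ).im * (ρ' : ℂ).im) ^ (1 / 2 - σ) *
              ((ρ : ℂ).im - (ρ' : ℂ).im + 1) ^ (2 * σ - 7 / 2)
          else 0)
        ≤ ENNReal.ofReal c₁ * W₁ ⌊(ρ : ℂ).im⌋₊ * W₂ ⌊(ρ' : ℂ).im⌋₊ := by
      intro ρ ρ'
      by_cases hcond : R < (ρ : ℂ).im ∧ (ρ' : ℂ).im < R
      case neg =>
        rw [if_neg hcond, ENNReal.ofReal_zero]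
        exact zero_le
      rw [if_pos hcond]
      obtain ⟨h1, h2⟩ := hcond
      have hγ : 0 < (ρ : ℂ).im := ρ.2.2.2.2
      have hδ : 0 < (ρ' : ℂ).im := ρ'.2.2.2.2
      have hn : N ≤ ⌊(ρ : ℂ).im⌋₊ := Nat.floor_le_floor h1.le
      have hm : ⌊(ρ' : ℂ).im⌋₊ ≤ N := Nat.floor_le_floor h2.le
      set γ := (ρ : ℂ).im
      set δ := (ρ' : ℂ).im
      set n := ⌊γ⌋₊ with hndef
      set m := ⌊δ⌋₊ with hmdef
      have hNn : (N:ℝ) ≤ (n:ℝ) := by exact_mod_cast hn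
      have hmN : (m:ℝ) ≤ (N:ℝ) := by exact_mod_cast hm
      have hnγ : (n:ℝ) ≤ γ := Nat.floor_le hγ.le
      have hδm : δ < (m:ℝ) + 1 := Nat.lt_floor_add_one δ
      have hd0 : (1:ℝ) ≤ γ - δ + 1 := by linarith
      have hx0 : (0:ℝ) < (n:ℝ) - m + 2 := by linarith
      have hxa0 : (0:ℝ) < (n:ℝ) - N + 1 := by linarith
      have hxb0 : (0:ℝ) < (N:ℝ) - m + 1 := by linarith
      have hdx : ((n:ℝ) - m + 2)/3 ≤ γ - δ + 1 := by
        rcases le_total ((n:ℝ) - m) 1 with h | h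
        · linarith
        · linarith
      have hstep : (γ - δ + 1) ^ (2*σ - 7/2)
          ≤ 3 ^ (-(2*σ - 7/2)) * (((n:ℝ) - N + 1) ^ a * ((N:ℝ) - m + 1) ^ b) := by
        have s1 : (γ - δ + 1) ^ (2*σ - 7/2) ≤ (((n:ℝ) - m + 2)/3) ^ (2*σ - 7/2) :=
          Real.rpow_le_rpow_of_nonpos (by positivity) hdx hp0
        have s2 : (((n:ℝ) - m + 2)/3) ^ (2*σ - 7/2)
            = 3 ^ (-(2*σ - 7/2)) * ((n:ℝ) - m + 2) ^ (2*σ - 7/2) := by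
          rw [Real.div_rpow hx0.le (by norm_num : (0:ℝ) ≤ 3),
            Real.rpow_neg (by norm_num : (0:ℝ) ≤ 3)]
          ring
        have s3 : ((n:ℝ) - m + 2) ^ (2*σ - 7/2)
            ≤ ((n:ℝ) - N + 1) ^ a * ((N:ℝ) - m + 1) ^ b := by
          have e1 : ((n:ℝ) - m + 2) ^ (2*σ - 7/2)
              = ((n:ℝ) - m + 2) ^ a * ((n:ℝ) - m + 2) ^ b := by
            rw [← Real.rpow_add hx0]
            congr 1
            rw [hadef, hbdef]; ring
          rw [e1]
          have t1 : ((n:ℝ) - m + 2) ^ a ≤ ((n:ℝ) - N + 1) ^ a :=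
            Real.rpow_le_rpow_of_nonpos hxa0 (by linarith) ha0
          have t2 : ((n:ℝ) - m + 2) ^ b ≤ ((N:ℝ) - m + 1) ^ b :=
            Real.rpow_le_rpow_of_nonpos hxb0 (by linarith) hb0
          exact mul_le_mul t1 t2 (Real.rpow_nonneg hx0.le b) (Real.rpow_nonneg hxa0.le a)
        calc (γ - δ + 1) ^ (2*σ - 7/2) ≤ (((n:ℝ) - m + 2)/3) ^ (2*σ - 7/2) := s1
          _ = 3 ^ (-(2*σ - 7/2)) * ((n:ℝ) - m + 2) ^ (2*σ - 7/2) := s2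
          _ ≤ 3 ^ (-(2*σ - 7/2)) * (((n:ℝ) - N + 1) ^ a * ((N:ℝ) - m + 1) ^ b) :=
            mul_le_mul_of_nonneg_left s3 (Real.rpow_nonneg (by norm_num) _)
      have hγδ : (γ * δ) ^ (1/2 - σ) ≤ R ^ (1/2 - σ) * C₀ := by
        rw [Real.mul_rpow hγ.le hδ.le]
        exact mul_le_mul (Real.rpow_le_rpow_of_nonpos hR0 h1.le (by linarith))
          (hC₀ _ ρ'.2) (Real.rpow_nonneg hδ.le _) (Real.rpow_nonneg hR0.le _)
      have keyreal : (γ * δ) ^ (1/2 - σ) * (γ - δ + 1) ^ (2*σ - 7/2)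
          ≤ c₁ * (((n:ℝ) - N + 1) ^ a * ((N:ℝ) - m + 1) ^ b) := by
        calc (γ * δ) ^ (1/2 - σ) * (γ - δ + 1) ^ (2*σ - 7/2)
            ≤ (R ^ (1/2 - σ) * C₀) *
              (3 ^ (-(2*σ - 7/2)) * (((n:ℝ) - N + 1) ^ a * ((N:ℝ) - m + 1) ^ b)) :=
              mul_le_mul hγδ hstep (Real.rpow_nonneg (by linarith) _) (by positivity)
          _ = c₁ * (((n:ℝ) - N + 1) ^ a * ((N:ℝ) - m + 1) ^ b) := by
              rw [hc₁]; ring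
      have h12 : (1:ℝ)/2 - σ = 1/2 - σ := rfl
      calc ENNReal.ofReal ((γ * δ) ^ (1/2 - σ) * (γ - δ + 1) ^ (2*σ - 7/2))
          ≤ ENNReal.ofReal (c₁ * (((n:ℝ) - N + 1) ^ a * ((N:ℝ) - m + 1) ^ b)) :=
            ENNReal.ofReal_le_ofReal keyreal
        _ = ENNReal.ofReal c₁ * ENNReal.ofReal (((n:ℝ) - N + 1) ^ a)
            * ENNReal.ofReal (((N:ℝ) - m + 1) ^ b) := by
            rw [ENNReal.ofReal_mul hc₁0, ENNReal.ofReal_mul (Real.rpow_nonneg hxa0.le a),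
              mul_assoc]
        _ = ENNReal.ofReal c₁ * W₁ n * W₂ m := by
            rw [hW₁, hW₂]
            simp only [if_pos hn, if_pos hm]
    -- slice finiteness
    have hfinslice : ∀ k : ℕ, {z : ℂ | z ∈ upperZetaZeros ∧ ⌊z.im⌋₊ = k}.Finite := by
      intro k
      apply (upperZetaZeros_finite_of_im_le ((k:ℝ)+1)).subset
      rintro z ⟨hz, hfl⟩
      refine ⟨hz, ?_⟩
      have h := Nat.lt_floor_add_one z.im
      rw [hfl] at h
      exact h.le
    have hccle : ∀ k : ℕ,
        ((Nat.card {z : ℂ | z ∈ upperZetaZeros ∧ ⌊z.im⌋₊ = k} : ℕ) : ℝ≥0∞)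
          ≤ ENNReal.ofReal (K * ((k:ℝ)+1) ^ ε) := by
      intro k
      rw [← ENNReal.ofReal_natCast]
      exact ENNReal.ofReal_le_ofReal (hKb k)
    -- the two single sums
    have hS₁ : (∑' ρ : upperZetaZeros, W₁ ⌊(ρ : ℂ).im⌋₊)
        ≤ ENNReal.ofReal (K * (2*R) ^ ε) * ENNReal.ofReal U₀ := by
      rw [tsum_comp_floor _ hfinslice]
      have hterm : ∀ k : ℕ,
          ((Nat.card {z : ℂ | z ∈ upperZetaZeros ∧ ⌊z.im⌋₊ = k} : ℕ) : ℝ≥0∞) * W₁ k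
            ≤ ENNReal.ofReal (K * (2*R) ^ ε) *
              (if N ≤ k then ENNReal.ofReal (((k:ℝ) - N + 1) ^ (-(1+ε))) else 0) := by
        intro k
        by_cases hk : N ≤ k
        · have hNk : (N:ℝ) ≤ (k:ℝ) := by exact_mod_cast hk
          have hxa0 : (0:ℝ) < (k:ℝ) - N + 1 := by linarith
          have hreal : K * ((k:ℝ)+1) ^ ε * ((k:ℝ) - N + 1) ^ a
              ≤ K * (2*R) ^ ε * ((k:ℝ) - N + 1) ^ (-(1+ε)) := by
            have u1 : ((k:ℝ)+1) ≤ ((N:ℝ)+1) * ((k:ℝ) - N + 1) := by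
              have hN0 : (0:ℝ) ≤ (N:ℝ) := Nat.cast_nonneg N
              nlinarith
            have u2 : ((k:ℝ)+1) ^ ε ≤ (((N:ℝ)+1) * ((k:ℝ) - N + 1)) ^ ε :=
              Real.rpow_le_rpow (by positivity) u1 hε.le
            have u3 : (((N:ℝ)+1) * ((k:ℝ) - N + 1)) ^ ε
                = ((N:ℝ)+1) ^ ε * ((k:ℝ) - N + 1) ^ ε :=
              Real.mul_rpow (by positivity) hxa0.le
            have u4 : ((N:ℝ)+1) ^ ε ≤ (2*R) ^ ε :=
              Real.rpow_le_rpow (by positivity) hN2R hε.le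
            have u5 : ((k:ℝ)+1) ^ ε ≤ (2*R) ^ ε * ((k:ℝ) - N + 1) ^ ε := by
              rw [u3] at u2
              exact u2.trans
                (mul_le_mul_of_nonneg_right u4 (Real.rpow_nonneg hxa0.le ε))
            have u6 : ((k:ℝ) - N + 1) ^ ε * ((k:ℝ) - N + 1) ^ a
                = ((k:ℝ) - N + 1) ^ (-(1+ε)) := by
              rw [← Real.rpow_add hxa0]
              congr 1
              rw [hadef]; ring
            calc K * ((k:ℝ)+1) ^ ε * ((k:ℝ) - N + 1) ^ a
                ≤ K * ((2*R) ^ ε * ((k:ℝ) - N + 1) ^ ε) * ((k:ℝ) - N + 1) ^ a := by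
                  apply mul_le_mul_of_nonneg_right
                    (mul_le_mul_of_nonneg_left u5 hK0) (Real.rpow_nonneg hxa0.le a)
              _ = K * (2*R) ^ ε * (((k:ℝ) - N + 1) ^ ε * ((k:ℝ) - N + 1) ^ a) := by ring
              _ = K * (2*R) ^ ε * ((k:ℝ) - N + 1) ^ (-(1+ε)) := by rw [u6]
          calc ((Nat.card {z : ℂ | z ∈ upperZetaZeros ∧ ⌊z.im⌋₊ = k} : ℕ) : ℝ≥0∞) * W₁ k
              = ((Nat.card {z : ℂ | z ∈ upperZetaZeros ∧ ⌊z.im⌋₊ = k} : ℕ) : ℝ≥0∞) *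
                ENNReal.ofReal (((k:ℝ) - N + 1) ^ a) := by
                rw [hW₁]; simp only [if_pos hk]
            _ ≤ ENNReal.ofReal (K * ((k:ℝ)+1) ^ ε) * ENNReal.ofReal (((k:ℝ) - N + 1) ^ a) :=
                mul_le_mul_left (hccle k) _
            _ = ENNReal.ofReal (K * ((k:ℝ)+1) ^ ε * ((k:ℝ) - N + 1) ^ a) :=
                (ENNReal.ofReal_mul (by positivity)).symm
            _ ≤ ENNReal.ofReal (K * (2*R) ^ ε * ((k:ℝ) - N + 1) ^ (-(1+ε))) :=
                ENNReal.ofReal_le_ofReal hreal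
            _ = ENNReal.ofReal (K * (2*R) ^ ε) *
                (if N ≤ k then ENNReal.ofReal (((k:ℝ) - N + 1) ^ (-(1+ε))) else 0) := by
                rw [if_pos hk, ← ENNReal.ofReal_mul (by positivity)]
        · calc ((Nat.card {z : ℂ | z ∈ upperZetaZeros ∧ ⌊z.im⌋₊ = k} : ℕ) : ℝ≥0∞) * W₁ k
              = 0 := by rw [hW₁]; simp only [if_neg hk, mul_zero]
            _ ≤ _ := zero_le
      calc ∑' k : ℕ, ((Nat.card {z : ℂ | z ∈ upperZetaZeros ∧ ⌊z.im⌋₊ = k} : ℕ) : ℝ≥0∞) * W₁ k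
          ≤ ∑' k : ℕ, ENNReal.ofReal (K * (2*R) ^ ε) *
              (if N ≤ k then ENNReal.ofReal (((k:ℝ) - N + 1) ^ (-(1+ε))) else 0) :=
            ENNReal.tsum_le_tsum hterm
        _ = ENNReal.ofReal (K * (2*R) ^ ε) *
            ∑' k : ℕ, (if N ≤ k then ENNReal.ofReal (((k:ℝ) - N + 1) ^ (-(1+ε))) else 0) :=
            ENNReal.tsum_mul_left
        _ = ENNReal.ofReal (K * (2*R) ^ ε) * ENNReal.ofReal U₀ := by
            congr 1
            have hshift : (∑' k : ℕ,
                (if N ≤ k then ENNReal.ofReal (((k:ℝ) - N + 1) ^ (-(1+ε))) else 0))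
                = ∑' i : ℕ, ENNReal.ofReal (((i:ℝ) + 1) ^ (-(1+ε))) := by
              apply tsum_eq_tsum_of_ne_zero_bij
                (i := fun x => (x : ℕ) + N)
              · intro x y hxy
                simp only at hxy
                exact Subtype.ext (by omega)
              · intro k hk
                by_cases h : N ≤ k
                · refine ⟨⟨k - N, ?_⟩, show k - N + N = k by omega⟩
                  simp only [Function.mem_support, ne_eq]
                  intro h0
                  rw [ENNReal.ofReal_eq_zero] at h0
                  exact absurd h0 (not_le.mpr (Real.rpow_pos_of_pos (by positivity) _))
                · rw [Function.mem_support, if_neg h] at hk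
                  exact absurd rfl hk
              · intro x
                rw [if_pos (Nat.le_add_left N x)]
                congr 2
                push_cast
                ring
            rw [hshift, hU₀def]
            exact (ENNReal.ofReal_tsum_of_nonneg hu0 hsumu).symm
    have hS₂ : (∑' ρ' : upperZetaZeros, W₂ ⌊(ρ' : ℂ).im⌋₊)
        ≤ ENNReal.ofReal (K * (2*R) ^ ε * (2*R) ^ q) * ENNReal.ofReal U₀ := by
      rw [tsum_comp_floor _ hfinslice]
      have hterm : ∀ k : ℕ,
          ((Nat.card {z : ℂ | z ∈ upperZetaZeros ∧ ⌊z.im⌋₊ = k} : ℕ) : ℝ≥0∞) * W₂ k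
            ≤ ENNReal.ofReal (K * (2*R) ^ ε * (2*R) ^ q) *
              (if k ≤ N then ENNReal.ofReal (((N:ℝ) - k + 1) ^ (-(1+ε))) else 0) := by
        intro k
        by_cases hk : k ≤ N
        · have hkN : (k:ℝ) ≤ (N:ℝ) := by exact_mod_cast hk
          have hxb0 : (0:ℝ) < (N:ℝ) - k + 1 := by linarith
          have honeb : (1:ℝ) ≤ (N:ℝ) - k + 1 := by linarith
          have hk0 : (0:ℝ) ≤ (k:ℝ) := Nat.cast_nonneg k
          have hreal : K * ((k:ℝ)+1) ^ ε * ((N:ℝ) - k + 1) ^ b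
              ≤ K * (2*R) ^ ε * (2*R) ^ q * ((N:ℝ) - k + 1) ^ (-(1+ε)) := by
            have v1 : ((k:ℝ)+1) ^ ε ≤ (2*R) ^ ε :=
              Real.rpow_le_rpow (by positivity) (by linarith) hε.le
            have v2 : ((N:ℝ) - k + 1) ^ b
                = ((N:ℝ) - k + 1) ^ (-(1+ε)) * ((N:ℝ) - k + 1) ^ (b+1+ε) := by
              rw [← Real.rpow_add hxb0]
              congr 1; ring
            have v3 : ((N:ℝ) - k + 1) ^ (b+1+ε) ≤ ((N:ℝ) - k + 1) ^ q := by
              apply Real.rpow_le_rpow_of_exponent_le honeb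
              have := le_max_right (0:ℝ) (2*σ - 3/2 + 3*ε)
              rw [hqdef, hbdef]
              linarith
            have v4 : ((N:ℝ) - k + 1) ^ q ≤ (2*R) ^ q :=
              Real.rpow_le_rpow hxb0.le (by linarith) hq0
            calc K * ((k:ℝ)+1) ^ ε * ((N:ℝ) - k + 1) ^ b
                = K * ((k:ℝ)+1) ^ ε *
                  (((N:ℝ) - k + 1) ^ (-(1+ε)) * ((N:ℝ) - k + 1) ^ (b+1+ε)) := by rw [← v2]
              _ ≤ K * (2*R) ^ ε *
                  (((N:ℝ) - k + 1) ^ (-(1+ε)) * (2*R) ^ q) := by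
                  apply mul_le_mul (mul_le_mul_of_nonneg_left v1 hK0)
                    (mul_le_mul_of_nonneg_left (v3.trans v4)
                      (Real.rpow_nonneg hxb0.le _))
                    (by positivity) (by positivity)
              _ = K * (2*R) ^ ε * (2*R) ^ q * ((N:ℝ) - k + 1) ^ (-(1+ε)) := by ring
          calc ((Nat.card {z : ℂ | z ∈ upperZetaZeros ∧ ⌊z.im⌋₊ = k} : ℕ) : ℝ≥0∞) * W₂ k
              = ((Nat.card {z : ℂ | z ∈ upperZetaZeros ∧ ⌊z.im⌋₊ = k} : ℕ) : ℝ≥0∞) *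
                ENNReal.ofReal (((N:ℝ) - k + 1) ^ b) := by
                rw [hW₂]; simp only [if_pos hk]
            _ ≤ ENNReal.ofReal (K * ((k:ℝ)+1) ^ ε) * ENNReal.ofReal (((N:ℝ) - k + 1) ^ b) :=
                mul_le_mul_left (hccle k) _
            _ = ENNReal.ofReal (K * ((k:ℝ)+1) ^ ε * ((N:ℝ) - k + 1) ^ b) :=
                (ENNReal.ofReal_mul (by positivity)).symm
            _ ≤ ENNReal.ofReal (K * (2*R) ^ ε * (2*R) ^ q * ((N:ℝ) - k + 1) ^ (-(1+ε))) :=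
                ENNReal.ofReal_le_ofReal hreal
            _ = ENNReal.ofReal (K * (2*R) ^ ε * (2*R) ^ q) *
                (if k ≤ N then ENNReal.ofReal (((N:ℝ) - k + 1) ^ (-(1+ε))) else 0) := by
                rw [if_pos hk, ← ENNReal.ofReal_mul (by positivity)]
        · calc ((Nat.card {z : ℂ | z ∈ upperZetaZeros ∧ ⌊z.im⌋₊ = k} : ℕ) : ℝ≥0∞) * W₂ k
              = 0 := by rw [hW₂]; simp only [if_neg hk, mul_zero]
            _ ≤ _ := zero_le
      have hv₂ : (∑' k : ℕ, (if k ≤ N then ENNReal.ofReal (((N:ℝ) - k + 1) ^ (-(1+ε))) else 0))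
          ≤ ENNReal.ofReal U₀ := by
        rw [tsum_eq_sum (s := Finset.range (N+1))
          (fun k hk => if_neg (fun hle => hk (Finset.mem_range.mpr (by omega))))]
        have hre : (∑ k ∈ Finset.range (N+1),
            (if k ≤ N then ENNReal.ofReal (((N:ℝ) - k + 1) ^ (-(1+ε))) else 0))
            = ∑ j ∈ Finset.range (N+1), ENNReal.ofReal (((j:ℝ) + 1) ^ (-(1+ε))) := by
          rw [← Finset.sum_range_reflect (fun j => ENNReal.ofReal (((j:ℝ) + 1) ^ (-(1+ε)))) (N+1)]
          apply Finset.sum_congr rfl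
          intro k hk
          have hk' : k ≤ N := by
            have := Finset.mem_range.mp hk
            omega
          rw [if_pos hk']
          have hNk : N + 1 - 1 - k = N - k := by omega
          rw [hNk, Nat.cast_sub hk']
        rw [hre]
        calc (∑ j ∈ Finset.range (N+1), ENNReal.ofReal (((j:ℝ) + 1) ^ (-(1+ε))))
            ≤ ∑' j : ℕ, ENNReal.ofReal (((j:ℝ) + 1) ^ (-(1+ε))) := ENNReal.sum_le_tsum _
          _ = ENNReal.ofReal U₀ := by
              rw [hU₀def]
              exact (ENNReal.ofReal_tsum_of_nonneg hu0 hsumu).symm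
      calc ∑' k : ℕ, ((Nat.card {z : ℂ | z ∈ upperZetaZeros ∧ ⌊z.im⌋₊ = k} : ℕ) : ℝ≥0∞) * W₂ k
          ≤ ∑' k : ℕ, ENNReal.ofReal (K * (2*R) ^ ε * (2*R) ^ q) *
              (if k ≤ N then ENNReal.ofReal (((N:ℝ) - k + 1) ^ (-(1+ε))) else 0) :=
            ENNReal.tsum_le_tsum hterm
        _ = ENNReal.ofReal (K * (2*R) ^ ε * (2*R) ^ q) *
            ∑' k : ℕ, (if k ≤ N then ENNReal.ofReal (((N:ℝ) - k + 1) ^ (-(1+ε))) else 0) :=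
            ENNReal.tsum_mul_left
        _ ≤ ENNReal.ofReal (K * (2*R) ^ ε * (2*R) ^ q) * ENNReal.ofReal U₀ :=
            mul_le_mul_right hv₂ _
    -- assemble the ENNReal bound
    set E : ℝ≥0∞ := ∑' ρ : upperZetaZeros, ∑' ρ' : upperZetaZeros,
      ENNReal.ofReal (if R < (ρ : ℂ).im ∧ (ρ' : ℂ).im < R then
          ((ρ : ℂ).im * (ρ' : ℂ).im) ^ (1 / 2 - σ) *
            ((ρ : ℂ).im - (ρ' : ℂ).im + 1) ^ (2 * σ - 7 / 2)
        else 0) with hEdef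
    have hKRε : (0:ℝ) ≤ K * (2*R) ^ ε := mul_nonneg hK0 (Real.rpow_nonneg (by linarith) _)
    have hKRq : (0:ℝ) ≤ K * (2*R) ^ ε * (2*R) ^ q :=
      mul_nonneg hKRε (Real.rpow_nonneg (by linarith) _)
    have hE : E ≤ ENNReal.ofReal (C * R ^ (-(3*ε))) := by
      have step1 : E ≤ ENNReal.ofReal c₁ * (∑' ρ : upperZetaZeros, W₁ ⌊(ρ : ℂ).im⌋₊)
          * (∑' ρ' : upperZetaZeros, W₂ ⌊(ρ' : ℂ).im⌋₊) := by
        rw [hEdef]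
        calc (∑' ρ : upperZetaZeros, ∑' ρ' : upperZetaZeros,
            ENNReal.ofReal (if R < (ρ : ℂ).im ∧ (ρ' : ℂ).im < R then
                ((ρ : ℂ).im * (ρ' : ℂ).im) ^ (1 / 2 - σ) *
                  ((ρ : ℂ).im - (ρ' : ℂ).im + 1) ^ (2 * σ - 7 / 2)
              else 0))
            ≤ ∑' ρ : upperZetaZeros, ∑' ρ' : upperZetaZeros,
              (ENNReal.ofReal c₁ * W₁ ⌊(ρ : ℂ).im⌋₊ * W₂ ⌊(ρ' : ℂ).im⌋₊) :=
              ENNReal.tsum_le_tsum (fun ρ => ENNReal.tsum_le_tsum (fun ρ' => hpt ρ ρ'))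
          _ = ∑' ρ : upperZetaZeros, (ENNReal.ofReal c₁ * W₁ ⌊(ρ : ℂ).im⌋₊ *
              ∑' ρ' : upperZetaZeros, W₂ ⌊(ρ' : ℂ).im⌋₊) :=
              tsum_congr (fun ρ => ENNReal.tsum_mul_left)
          _ = (∑' ρ : upperZetaZeros, ENNReal.ofReal c₁ * W₁ ⌊(ρ : ℂ).im⌋₊) *
              (∑' ρ' : upperZetaZeros, W₂ ⌊(ρ' : ℂ).im⌋₊) := ENNReal.tsum_mul_right
          _ = ENNReal.ofReal c₁ * (∑' ρ : upperZetaZeros, W₁ ⌊(ρ : ℂ).im⌋₊) *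
              (∑' ρ' : upperZetaZeros, W₂ ⌊(ρ' : ℂ).im⌋₊) := by
              rw [ENNReal.tsum_mul_left]
      have step2 : E ≤ ENNReal.ofReal c₁ *
          (ENNReal.ofReal (K * (2*R) ^ ε) * ENNReal.ofReal U₀) *
          (ENNReal.ofReal (K * (2*R) ^ ε * (2*R) ^ q) * ENNReal.ofReal U₀) :=
        step1.trans (mul_le_mul' (mul_le_mul' le_rfl hS₁) hS₂)
      have step3 : ENNReal.ofReal c₁ *
          (ENNReal.ofReal (K * (2*R) ^ ε) * ENNReal.ofReal U₀) *
          (ENNReal.ofReal (K * (2*R) ^ ε * (2*R) ^ q) * ENNReal.ofReal U₀)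
          = ENNReal.ofReal (c₁ * (K * (2*R) ^ ε * U₀) * (K * (2*R) ^ ε * (2*R) ^ q * U₀)) := by
        rw [← ENNReal.ofReal_mul hKRε, ← ENNReal.ofReal_mul hKRq,
          ← ENNReal.ofReal_mul hc₁0, ← ENNReal.ofReal_mul (by positivity)]
      have hfinalreal : c₁ * (K * (2*R) ^ ε * U₀) * (K * (2*R) ^ ε * (2*R) ^ q * U₀)
          ≤ C * R ^ (-(3*ε)) := by
        have h2R : (0:ℝ) < 2*R := by linarith
        have hexp : 2*ε + q + (1/2 - σ) ≤ -(3*ε) := by linarith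
        have m1 : (2*R) ^ ε * ((2*R) ^ ε * (2*R) ^ q) = (2*R) ^ (2*ε+q) := by
          rw [← Real.rpow_add h2R, ← Real.rpow_add h2R]
          congr 1; ring
        calc c₁ * (K * (2*R) ^ ε * U₀) * (K * (2*R) ^ ε * (2*R) ^ q * U₀)
            = (C₀ * 3 ^ (-(2*σ - 7/2)) * K^2 * U₀^2) *
              ((2*R) ^ ε * ((2*R) ^ ε * (2*R) ^ q)) * R ^ (1/2 - σ) := by
              rw [hc₁]; ring
          _ = (C₀ * 3 ^ (-(2*σ - 7/2)) * K^2 * U₀^2) * (2*R) ^ (2*ε+q) * R ^ (1/2 - σ) := by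
              rw [m1]
          _ = (C₀ * 3 ^ (-(2*σ - 7/2)) * K^2 * U₀^2) *
              (2 ^ (2*ε+q) * R ^ (2*ε+q)) * R ^ (1/2 - σ) := by
              rw [Real.mul_rpow (by norm_num) hR0.le]
          _ = C * (R ^ (2*ε+q) * R ^ (1/2 - σ)) := by
              rw [hCdef]; ring
          _ = C * R ^ (2*ε+q+(1/2 - σ)) := by
              rw [← Real.rpow_add hR0]
          _ ≤ C * R ^ (-(3*ε)) :=
              mul_le_mul_of_nonneg_left (Real.rpow_le_rpow_of_exponent_le hR1 hexp) hC0
      calc E ≤ _ := step2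
        _ = _ := step3
        _ ≤ ENNReal.ofReal (C * R ^ (-(3*ε))) := ENNReal.ofReal_le_ofReal hfinalreal
    -- back to the real sum
    have hinner_ne : ∀ ρ : upperZetaZeros,
        (∑' ρ' : upperZetaZeros,
          ENNReal.ofReal (if R < (ρ : ℂ).im ∧ (ρ' : ℂ).im < R then
              ((ρ : ℂ).im * (ρ' : ℂ).im) ^ (1 / 2 - σ) *
                ((ρ : ℂ).im - (ρ' : ℂ).im + 1) ^ (2 * σ - 7 / 2)
            else 0)) ≠ ⊤ := by
      intro ρ
      have h := ENNReal.le_tsum (f := fun ρ : upperZetaZeros =>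
        ∑' ρ' : upperZetaZeros,
          ENNReal.ofReal (if R < (ρ : ℂ).im ∧ (ρ' : ℂ).im < R then
              ((ρ : ℂ).im * (ρ' : ℂ).im) ^ (1 / 2 - σ) *
                ((ρ : ℂ).im - (ρ' : ℂ).im + 1) ^ (2 * σ - 7 / 2)
            else 0)) ρ
      exact (lt_of_le_of_lt (h.trans hE) ENNReal.ofReal_lt_top).ne
    have houter : (∑' ρ : upperZetaZeros, ∑' ρ' : upperZetaZeros,
        (if R < (ρ : ℂ).im ∧ (ρ' : ℂ).im < R then
          ((ρ : ℂ).im * (ρ' : ℂ).im) ^ (1 / 2 - σ) *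
            ((ρ : ℂ).im - (ρ' : ℂ).im + 1) ^ (2 * σ - 7 / 2)
        else 0)) = E.toReal := by
      rw [hEdef, ENNReal.tsum_toReal_eq hinner_ne]
      refine tsum_congr fun ρ => ?_
      rw [ENNReal.tsum_toReal_eq (fun ρ' => ENNReal.ofReal_ne_top)]
      exact tsum_congr fun ρ' => (ENNReal.toReal_ofReal (hGnn R ρ ρ')).symm
    rw [houter]
    exact ENNReal.toReal_le_of_le_ofReal
      (mul_nonneg hC0 (Real.rpow_nonneg hR0.le _)) hE
  have hlim : Tendsto (fun R : ℝ => C * R ^ (-(3*ε))) atTop (𝓝 0) := by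
    have h := (tendsto_rpow_neg_atTop (by positivity : (0:ℝ) < 3*ε)).const_mul C
    simpa using h
  refine squeeze_zero'
    (Filter.Eventually.of_forall fun R => tsum_nonneg fun ρ => tsum_nonneg fun ρ' => hGnn R ρ ρ')
    (Filter.eventually_atTop.mpr ⟨3, fun R hR => key R hR⟩) hlim
end
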